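/- Let (X, μ) be a measure space with μ finite, and let u, v : X → ℝ be measurable functions belonging to L⁴(μ). Then ∫ f(u)·(u − v) dμ ≥ ∫ F(u) dμ − ∫ F(v) dμ + (1/4)·∫ (u² − v²)² dμ − (1/2)·∫ (u − v)² dμ. (This is the integrated one-sided energy estimate (tfe1), with L⁴-membership guaranteeing that every integral is finite.) -/

import Mathlib

open MeasureTheory

/-- The Allen–Cahn nonlinearity `f(x) = x³ − x`. -/
noncomputable def acF (x : ℝ) : ℝ := x ^ 3 - x

/-- The double-well potential `F(x) = (1/4)(x² − 1)²`. -/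
noncomputable def acPot (x : ℝ) : ℝ := (1 / 4) * (x ^ 2 - 1) ^ 2

lemma l2mul {X : Type*} [MeasurableSpace X] {μ : Measure X} {a b : X → ℝ}
    (ha : MemLp a 4 μ) (hb : MemLp b 4 μ) : MemLp (fun x => a x * b x) 2 μ := by
  have h : (1 : ENNReal) / 2 = 1 / 4 + 1 / 4 := by
    rw [ENNReal.div_add_div_same]
    rw [ENNReal.div_eq_div_iff] <;> norm_num
  haveI : ENNReal.HolderTriple 4 4 2 := ⟨by simpa [one_div] using h.symm⟩
  have : MemLp (fun x => a x • b x) 2 μ := hb.smul ha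
  simpa [smul_eq_mul] using this

lemma intmul {X : Type*} [MeasurableSpace X] {μ : Measure X} {a b : X → ℝ}
    (ha : MemLp a 2 μ) (hb : MemLp b 2 μ) : Integrable (fun x => a x * b x) μ := by
  have h : (1 : ENNReal) / 1 = 1 / 2 + 1 / 2 := by
    rw [ENNReal.div_add_div_same]
    rw [ENNReal.div_eq_div_iff] <;> norm_num
  have : MemLp (fun x => a x • b x) 1 μ := hb.smul (r := 1) ha
  rw [← memLp_one_iff_integrable]
  simpa [smul_eq_mul] using this

/-- Integrated one-sided energy estimate (tfe1): if `u, v ∈ L⁴(μ)` with `μ` finite, then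
`∫ f(u)(u − v) dμ ≥ ∫ F(u) dμ − ∫ F(v) dμ + (1/4)∫ (u² − v²)² dμ − (1/2)∫ (u − v)² dμ`. -/
theorem stmt2 {X : Type*} [MeasurableSpace X] (μ : Measure X) [IsFiniteMeasure μ]
    (u v : X → ℝ) (hu : Measurable u) (hv : Measurable v)
    (hu4 : MemLp u 4 μ) (hv4 : MemLp v 4 μ) :
    ∫ x, acF (u x) * (u x - v x) ∂μ ≥
      ∫ x, acPot (u x) ∂μ - ∫ x, acPot (v x) ∂μ
        + (1 / 4) * ∫ x, ((u x) ^ 2 - (v x) ^ 2) ^ 2 ∂μ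
        - (1 / 2) * ∫ x, (u x - v x) ^ 2 ∂μ := by
  have hU2 : MemLp (fun x => u x * u x) 2 μ := l2mul hu4 hu4
  have hV2 : MemLp (fun x => v x * v x) 2 μ := l2mul hv4 hv4
  have hc : MemLp (fun _ : X => (1 : ℝ)) 2 μ := memLp_const 1
  have hG : MemLp (fun x => u x * u x - 1) 2 μ := hU2.sub hc
  have hGv : MemLp (fun x => v x * v x - 1) 2 μ := hV2.sub hc
  have hH : MemLp (fun x => u x * u x - v x * v x) 2 μ := hU2.sub hV2
  have hu2 : MemLp u 2 μ := hu4.mono_exponent (by norm_num)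
  have hv2 : MemLp v 2 μ := hv4.mono_exponent (by norm_num)
  have hK : MemLp (fun x => u x - v x) 2 μ := hu2.sub hv2
  have hM : MemLp (fun x => u x * (u x - v x)) 2 μ := l2mul hu4 (hu4.sub hv4)
  -- integrabilities
  have I1 : Integrable (fun x => acF (u x) * (u x - v x)) μ := by
    have := intmul hG hM
    apply this.congr
    filter_upwards with x
    simp only [acF]; ring
  have I2 : Integrable (fun x => acPot (u x)) μ := by
    have := (intmul hG hG).const_mul (1 / 4 : ℝ)
    apply this.congr
    filter_upwards with x
    simp only [acPot]; ring
  have I3 : Integrable (fun x => acPot (v x)) μ := by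
    have := (intmul hGv hGv).const_mul (1 / 4 : ℝ)
    apply this.congr
    filter_upwards with x
    simp only [acPot]; ring
  have I4 : Integrable (fun x => ((u x) ^ 2 - (v x) ^ 2) ^ 2) μ := by
    have := intmul hH hH
    apply this.congr
    filter_upwards with x
    ring
  have I5 : Integrable (fun x => (u x - v x) ^ 2) μ := by
    have := intmul hK hK
    apply this.congr
    filter_upwards with x
    ring
  have key : ∀ x, acPot (u x) - acPot (v x) + (1 / 4) * ((u x) ^ 2 - (v x) ^ 2) ^ 2
      - (1 / 2) * (u x - v x) ^ 2 ≤ acF (u x) * (u x - v x) := by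
    intro x
    simp only [acF, acPot]
    nlinarith [sq_nonneg (u x * (u x - v x))]
  have hsum : Integrable (fun x => acPot (u x) - acPot (v x)
      + (1 / 4) * ((u x) ^ 2 - (v x) ^ 2) ^ 2 - (1 / 2) * (u x - v x) ^ 2) μ :=
    ((I2.sub I3).add (I4.const_mul _)).sub (I5.const_mul _)
  have IAB : Integrable (fun x => acPot (u x) - acPot (v x)) μ := I2.sub I3
  have IC : Integrable (fun x => (1 / 4 : ℝ) * ((u x) ^ 2 - (v x) ^ 2) ^ 2) μ := I4.const_mul _
  have ID : Integrable (fun x => (1 / 2 : ℝ) * (u x - v x) ^ 2) μ := I5.const_mul _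
  have IABC : Integrable (fun x => acPot (u x) - acPot (v x)
      + (1 / 4) * ((u x) ^ 2 - (v x) ^ 2) ^ 2) μ := IAB.add IC
  have this2 := integral_mono hsum I1 key
  rw [ge_iff_le, ← integral_const_mul (1 / 4 : ℝ), ← integral_const_mul (1 / 2 : ℝ),
    ← integral_sub I2 I3, ← integral_add IAB IC, ← integral_sub IABC ID]
  exact this2
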